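/- Let p be a prime and let e₁, e₂, e₃ be positive integers, each prime to p, satisfying the triangle inequality and with e₁+e₂+e₃ odd, and let d be the integer with 2d−2 = (e₁−1)+(e₂−1)+(e₃−1). If e₁ < p and e₂ < p, then (e₁,e₂,e₃) is numerically p-admissible if and only if d < p. -/
import Mathlib


/-- `eDown q e` is `e^{[m,d]} = e − q⌊e/q⌋` where `q = p^m`. -/
def eDown (q e : ℕ) : ℕ := e - q * (e / q)

/-- `eUp q e` is `e^{[m,u]} = q⌈e/q⌉ − e` where `q = p^m`. -/
def eUp (q e : ℕ) : ℕ := q * ((e + q - 1) / q) - e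

/-- Numerical `p`-admissibility for a triple (with `2d − 2 = Σᵢ (eᵢ − 1)`). -/
def NumericallyPAdmissible3 (p d : ℕ) (e : Fin 3 → ℕ) : Prop :=
  ∀ m : ℕ, 1 ≤ m → ∀ S : Finset (Fin 3),
    p ^ m ≤ d →
    (∀ i ∈ S, p ^ m < e i) →
    Odd ((∑ i ∈ S, e i / p ^ m) + ∑ i ∈ Sᶜ, (e i + p ^ m - 1) / p ^ m) →
    p ^ m ≤ (∑ i ∈ S, eDown (p ^ m) (e i)) + ∑ i ∈ Sᶜ, eUp (p ^ m) (e i)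

lemma ceil_div_eq_one {e p : ℕ} (h0 : 0 < e) (h1 : e ≤ p) : (e + p - 1) / p = 1 := by
  have hp : 0 < p := lt_of_lt_of_le h0 h1
  exact Nat.div_eq_of_lt_le (by omega) (by omega)

/-- Corollary: if `e₁, e₂ < p`, then `(e₁, e₂, e₃)` is numerically `p`-admissible if and
only if `d < p`. -/
theorem numAdmiss3_iff_d_lt_p_of_two_small (p : ℕ) (hp : p.Prime) (d : ℕ)
    (e : Fin 3 → ℕ)
    (he : ∀ i, 0 < e i) (hep : ∀ i, ¬ p ∣ e i)
    (htri : e 0 ≤ e 1 + e 2 ∧ e 1 ≤ e 0 + e 2 ∧ e 2 ≤ e 0 + e 1)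
    (hodd : Odd (e 0 + e 1 + e 2))
    (hsum : 2 * d + 1 = e 0 + e 1 + e 2)
    (h1 : e 0 < p) (h2 : e 1 < p) :
    NumericallyPAdmissible3 p d e ↔ d < p := by
  have hp2 : 2 ≤ p := hp.two_le
  constructor
  · intro hadm
    by_contra hd
    push_neg at hd
    -- p ≤ d
    have hne2 : e 2 ≠ p := fun h => hep 2 (h ▸ dvd_refl p)
    have h01 : e 0 / p = 0 := Nat.div_eq_of_lt h1
    have h11 : e 1 / p = 0 := Nat.div_eq_of_lt h2
    have hc0 : (e 0 + p - 1) / p = 1 := ceil_div_eq_one (he 0) h1.le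
    have hc1 : (e 1 + p - 1) / p = 1 := ceil_div_eq_one (he 1) h2.le
    rcases lt_or_gt_of_ne hne2 with hlt | hgt
    · -- e 2 < p : use S = ∅
      have hc2 : (e 2 + p - 1) / p = 1 := ceil_div_eq_one (he 2) hlt.le
      have := hadm 1 le_rfl ∅ (by rwa [pow_one]) (by simp)
      rw [pow_one] at this
      simp only [Finset.sum_empty, Finset.compl_empty, zero_add,
        Fin.sum_univ_three, hc0, hc1, hc2] at this
      have hkey := this (by decide)
      simp only [eUp, hc0, hc1, hc2, mul_one] at hkey
      obtain ⟨k, hk⟩ := hodd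
      omega
    · -- e 2 > p : use S = {2}
      have h2lt : e 2 < 2 * p := by omega
      have hd2 : e 2 / p = 1 := by
        exact Nat.div_eq_of_lt_le (by omega) (by omega)
      have hcompl : ({2} : Finset (Fin 3))ᶜ = {0, 1} := by decide
      have := hadm 1 le_rfl {2} (by rwa [pow_one])
        (by intro i hi; simp at hi; subst hi; rwa [pow_one])
      rw [pow_one, hcompl] at this
      rw [Finset.sum_singleton, Finset.sum_singleton,
        Finset.sum_pair (by decide), Finset.sum_pair (by decide), hd2, hc0, hc1] at this
      have hkey := this (by decide)
      simp only [eDown, eUp, hd2, hc0, hc1, mul_one] at hkey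
      obtain ⟨k, hk⟩ := hodd
      omega
  · intro hd m hm S hpm _ _
    exfalso
    have : p ≤ p ^ m := Nat.le_self_pow (by omega) p
    omega
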